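/- The multiplicative group of positive real numbers H = (ℝ_{>0}, ×) is not a real affine algebraic variety: the ℝ-algebra of regular functions on H (rational functions p/q with q nonvanishing on ℝ_{>0}) is not a finitely generated ℝ-algebra. In particular, the rational functions 1/(x+a) for a > 0 are pairwise distinct elements, no finite subset of which generates them all over ℝ[x]. -/

import Mathlib

open Polynomial

noncomputable section PosRealsAux

/-- Two real polynomials agreeing on all positive reals are equal. -/
private lemma eq_poly_of_eval_pos {p q : Polynomial ℝ}
    (h : ∀ x : ℝ, 0 < x → p.eval x = q.eval x) : p = q := by
  have h0 : p - q = 0 := by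
    apply Polynomial.eq_zero_of_infinite_isRoot
    apply Set.Infinite.mono (s := Set.Ioi (0:ℝ)) ?_ (Set.Ioi_infinite 0)
    intro x hx
    simp only [Set.mem_setOf_eq, Polynomial.IsRoot, Polynomial.eval_sub, sub_eq_zero]
    exact h x hx
  exact sub_eq_zero.mp h0

/-- Rational functions on the positive reals whose denominator moreover doesn't
vanish at `-a`. -/
private def regAt (a : ℝ) : Subalgebra ℝ ({x : ℝ // 0 < x} → ℝ) where
  carrier := {f | ∃ p q : Polynomial ℝ, Polynomial.eval (-a) q ≠ 0 ∧
    (∀ x : {x : ℝ // 0 < x}, Polynomial.eval x.1 q ≠ 0) ∧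
    ∀ x : {x : ℝ // 0 < x}, f x = Polynomial.eval x.1 p / Polynomial.eval x.1 q}
  mul_mem' := by
    rintro f g ⟨p1, q1, ha1, hq1, hf1⟩ ⟨p2, q2, ha2, hq2, hf2⟩
    exact ⟨p1 * p2, q1 * q2, by simp [ha1, ha2],
      fun x => by simp [hq1 x, hq2 x],
      fun x => by simp [Pi.mul_apply, hf1 x, hf2 x, div_mul_div_comm]⟩
  add_mem' := by
    rintro f g ⟨p1, q1, ha1, hq1, hf1⟩ ⟨p2, q2, ha2, hq2, hf2⟩
    refine ⟨p1 * q2 + q1 * p2, q1 * q2, by simp [ha1, ha2],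
      fun x => by simp [hq1 x, hq2 x], fun x => ?_⟩
    rw [Pi.add_apply, hf1 x, hf2 x, div_add_div _ _ (hq1 x) (hq2 x)]
    simp
  algebraMap_mem' := by
    intro r
    exact ⟨Polynomial.C r, 1, by simp, by simp, fun x => by simp [Pi.algebraMap_apply]⟩

private lemma inv_not_mem_regAt {a : ℝ} (ha : 0 < a) :
    (fun x : {x : ℝ // 0 < x} => (x.1 + a)⁻¹) ∉ regAt a := by
  rintro ⟨p, q, hqa, hq, hf⟩
  have key : ∀ x : ℝ, 0 < x → (p * (X + C a)).eval x = q.eval x := by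
    intro x hx
    have hxa : x + a ≠ 0 := by positivity
    have h := hf ⟨x, hx⟩
    simp only at h
    have hq' := hq ⟨x, hx⟩
    simp only at hq'
    rw [eq_div_iff hq'] at h
    have : q.eval x = p.eval x * (x + a) := by
      field_simp at h
      linarith [h]
    simp [this]
  have hpoly := eq_poly_of_eval_pos key
  apply hqa
  rw [← hpoly]
  simp

private lemma xfun_mem_regAt (a : ℝ) :
    (fun x : {x : ℝ // 0 < x} => x.1) ∈ regAt a :=
  ⟨X, 1, by simp, fun x => by simp, fun x => by simp⟩

private lemma inv_mem_regAt {a b : ℝ} (hb : 0 < b) (hab : b ≠ a) :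
    (fun x : {x : ℝ // 0 < x} => (x.1 + b)⁻¹) ∈ regAt a := by
  refine ⟨1, X + C b, ?_, fun x => ?_, fun x => ?_⟩
  · simp only [Polynomial.eval_add, Polynomial.eval_X, Polynomial.eval_C]
    intro h
    exact hab (by linarith)
  · simp only [Polynomial.eval_add, Polynomial.eval_X, Polynomial.eval_C]
    have := x.2; positivity
  · simp [one_div]

/-- Rational functions on the positive reals (the set in the theorem statement). -/
private def regAll : Subalgebra ℝ ({x : ℝ // 0 < x} → ℝ) where
  carrier := {f | ∃ p q : Polynomial ℝ,
    (∀ x : {x : ℝ // 0 < x}, Polynomial.eval x.1 q ≠ 0) ∧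
    ∀ x : {x : ℝ // 0 < x}, f x = Polynomial.eval x.1 p / Polynomial.eval x.1 q}
  mul_mem' := by
    rintro f g ⟨p1, q1, hq1, hf1⟩ ⟨p2, q2, hq2, hf2⟩
    exact ⟨p1 * p2, q1 * q2, fun x => by simp [hq1 x, hq2 x],
      fun x => by simp [Pi.mul_apply, hf1 x, hf2 x, div_mul_div_comm]⟩
  add_mem' := by
    rintro f g ⟨p1, q1, hq1, hf1⟩ ⟨p2, q2, hq2, hf2⟩
    refine ⟨p1 * q2 + q1 * p2, q1 * q2, fun x => by simp [hq1 x, hq2 x], fun x => ?_⟩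
    rw [Pi.add_apply, hf1 x, hf2 x, div_add_div _ _ (hq1 x) (hq2 x)]
    simp
  algebraMap_mem' := by
    intro r
    exact ⟨Polynomial.C r, 1, by simp, fun x => by simp [Pi.algebraMap_apply]⟩

private lemma bad_finite {g : {x : ℝ // 0 < x} → ℝ} (hg : g ∈ regAll) :
    {a : ℝ | g ∉ regAt a}.Finite := by
  obtain ⟨p, q, hq, hf⟩ := hg
  have hq0 : q ≠ 0 := fun h => hq ⟨1, one_pos⟩ (by simp [h])
  have hroots : {x : ℝ | q.IsRoot x}.Finite := Polynomial.finite_setOf_isRoot hq0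
  have hpre : ((fun a : ℝ => -a) ⁻¹' {x : ℝ | q.IsRoot x}).Finite :=
    Set.Finite.preimage (Set.injOn_of_injective neg_injective) hroots
  apply Set.Finite.subset hpre
  intro a ha
  simp only [Set.mem_setOf_eq] at ha
  by_contra h
  simp only [Set.mem_preimage, Set.mem_setOf_eq, Polynomial.IsRoot] at h
  exact ha ⟨p, q, h, hq, hf⟩

private lemma exists_good {F : Set ℝ} (hF : F.Finite) : ∃ a : ℝ, 0 < a ∧ a ∉ F := by
  have hinf : (Set.Ioi (0:ℝ) \ F).Infinite := (Set.Ioi_infinite 0).diff hF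
  obtain ⟨a, ha⟩ := hinf.nonempty
  exact ⟨a, ha.1, ha.2⟩

end PosRealsAux

/-- The ℝ-algebra of regular functions on the multiplicative group of positive reals
(rational functions `p/q` with `q` nonvanishing on `ℝ_{>0}`) is not a finitely generated
ℝ-algebra; the functions `x ↦ 1/(x+a)` for `a > 0` are linearly independent, and no finite
subset of them together with `x` generates them all over ℝ. -/
theorem positive_reals_not_affine_algebraic :
    (¬ (Algebra.adjoin ℝ
      {f : {x : ℝ // 0 < x} → ℝ | ∃ p q : Polynomial ℝ,
        (∀ x : {x : ℝ // 0 < x}, Polynomial.eval x.1 q ≠ 0) ∧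
        ∀ x : {x : ℝ // 0 < x}, f x = Polynomial.eval x.1 p / Polynomial.eval x.1 q}).FG) ∧
    LinearIndependent ℝ
      (fun a : {a : ℝ // 0 < a} => fun x : {x : ℝ // 0 < x} => (x.1 + a.1)⁻¹) ∧
    (∀ t : Finset {a : ℝ // 0 < a}, ∃ a : {a : ℝ // 0 < a},
      (fun x : {x : ℝ // 0 < x} => (x.1 + a.1)⁻¹) ∉
        Algebra.adjoin ℝ (insert (fun x : {x : ℝ // 0 < x} => x.1)
          {g : {x : ℝ // 0 < x} → ℝ | ∃ b ∈ t, g = fun x => (x.1 + b.1)⁻¹})) := by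
  refine ⟨?_, ?_, ?_⟩
  · -- Part 1: not finitely generated
    intro hFG
    obtain ⟨t, ht⟩ := hFG
    set S := {f : {x : ℝ // 0 < x} → ℝ | ∃ p q : Polynomial ℝ,
        (∀ x : {x : ℝ // 0 < x}, Polynomial.eval x.1 q ≠ 0) ∧
        ∀ x : {x : ℝ // 0 < x}, f x = Polynomial.eval x.1 p / Polynomial.eval x.1 q} with hSdef
    have hSle : Algebra.adjoin ℝ S ≤ regAll := Algebra.adjoin_le (fun f hf => hf)
    have htS : ∀ g ∈ (t : Set _), g ∈ regAll := by
      intro g hg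
      exact hSle (ht ▸ Algebra.subset_adjoin hg)
    have hbad : (⋃ g ∈ (t : Set ({x : ℝ // 0 < x} → ℝ)), {a : ℝ | g ∉ regAt a}).Finite :=
      Set.Finite.biUnion t.finite_toSet (fun g hg => bad_finite (htS g hg))
    obtain ⟨a, ha, haF⟩ := exists_good hbad
    have hgen : ∀ g ∈ (t : Set _), g ∈ regAt a := by
      intro g hg
      by_contra h
      exact haF (Set.mem_biUnion hg h)
    have hle : Algebra.adjoin ℝ (t : Set _) ≤ regAt a := Algebra.adjoin_le hgen
    have hmem : (fun x : {x : ℝ // 0 < x} => (x.1 + a)⁻¹) ∈ Algebra.adjoin ℝ S := by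
      apply Algebra.subset_adjoin
      refine ⟨1, X + C a, fun x => ?_, fun x => ?_⟩
      · simp only [Polynomial.eval_add, Polynomial.eval_X, Polynomial.eval_C]
        have := x.2; positivity
      · simp [one_div]
    rw [← ht] at hmem
    exact inv_not_mem_regAt ha (hle hmem)
  · -- Part 2: linear independence
    rw [linearIndependent_iff']
    intro s g hsum a0 ha0
    set P : Polynomial ℝ :=
      ∑ a ∈ s, Polynomial.C (g a) * ∏ b ∈ s.erase a, (X + Polynomial.C b.1) with hP
    have hP0 : P = 0 := by
      apply Polynomial.eq_zero_of_infinite_isRoot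
      apply Set.Infinite.mono (s := Set.Ioi (0:ℝ)) ?_ (Set.Ioi_infinite 0)
      intro x hx
      simp only [Set.mem_setOf_eq, Polynomial.IsRoot]
      have hx' : ∑ a ∈ s, g a * (x + a.1)⁻¹ = 0 := by
        have := congrFun hsum ⟨x, hx⟩
        simpa using this
      have hx0 : (0:ℝ) < x := hx
      have hprod : ∀ a ∈ s, (x + a.1) ≠ 0 := fun a _ => by have := a.2; positivity
      have heval : P.eval x = ∑ a ∈ s, g a * ∏ b ∈ s.erase a, (x + b.1) := by
        simp only [hP, Polynomial.eval_finset_sum, Polynomial.eval_mul, Polynomial.eval_C,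
          Polynomial.eval_prod, Polynomial.eval_add, Polynomial.eval_X]
      rw [heval]
      have : ∀ a ∈ s, g a * ∏ b ∈ s.erase a, (x + b.1)
          = (g a * (x + a.1)⁻¹) * ∏ b ∈ s, (x + b.1) := by
        intro a haa
        rw [← Finset.mul_prod_erase s _ haa]
        field_simp [hprod a haa]
      rw [Finset.sum_congr rfl this, ← Finset.sum_mul, hx', zero_mul]
    have heval0 := congrArg (Polynomial.eval (-a0.1)) hP0
    rw [hP] at heval0
    simp only [Polynomial.eval_finset_sum, Polynomial.eval_mul, Polynomial.eval_C,
      Polynomial.eval_prod, Polynomial.eval_add, Polynomial.eval_X,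
      Polynomial.eval_zero] at heval0
    rw [Finset.sum_eq_single a0] at heval0
    · have hne : ∏ b ∈ s.erase a0, (-a0.1 + b.1) ≠ 0 := by
        apply Finset.prod_ne_zero_iff.mpr
        intro b hb
        have hb' : b ≠ a0 := Finset.ne_of_mem_erase hb
        intro h
        apply hb'
        apply Subtype.ext
        linarith
      exact (mul_eq_zero.mp heval0).resolve_right hne
    · intro a ha hne
      have : a0 ∈ s.erase a := Finset.mem_erase.mpr ⟨fun h => hne h.symm, ha0⟩
      rw [Finset.prod_eq_zero this (by ring)]
      ring
    · intro h; exact absurd ha0 h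
  · -- Part 3
    intro t
    set a : ℝ := 1 + ∑ b ∈ t, b.1 with hadef
    have hsum_nonneg : 0 ≤ ∑ b ∈ t, b.1 :=
      Finset.sum_nonneg (fun b _ => le_of_lt b.2)
    have ha : 0 < a := by rw [hadef]; linarith
    refine ⟨⟨a, ha⟩, ?_⟩
    intro hmem
    have hlt : ∀ b ∈ t, b.1 < a := by
      intro b hb
      have : b.1 ≤ ∑ c ∈ t, c.1 := Finset.single_le_sum (fun c _ => le_of_lt c.2) hb
      rw [hadef]; linarith
    have hle : Algebra.adjoin ℝ (insert (fun x : {x : ℝ // 0 < x} => x.1)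
        {g : {x : ℝ // 0 < x} → ℝ | ∃ b ∈ t, g = fun x => (x.1 + b.1)⁻¹}) ≤ regAt a := by
      apply Algebra.adjoin_le
      rintro f (rfl | ⟨b, hb, rfl⟩)
      · exact xfun_mem_regAt a
      · exact inv_mem_regAt b.2 (ne_of_lt (hlt b hb))
    exact inv_not_mem_regAt ha (hle hmem)
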